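/- For every bounded linear operator S on a complex Hilbert space, every α ∈ [0,1], and every r ≥ 2, dw(S)^r ≤ (2^{r/2}/4)·‖|S|^{2rα} + |S*|^{2r(1−α)} + |S*S|^{2rα} + |S*S|^{2r(1−α)}‖. -/

import Mathlib

open scoped InnerProductSpace

variable {H : Type*} [NormedAddCommGroup H] [InnerProductSpace ℂ H] [CompleteSpace H]

noncomputable def dwRadius (S : H →L[ℂ] H) : ℝ :=
  ⨆ x : {x : H // ‖x‖ = 1}, Real.sqrt (‖(⟪S x.1, x.1⟫_ℂ : ℂ)‖ ^ 2 + ‖S x.1‖ ^ 4)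

noncomputable def opAbs (S : H →L[ℂ] H) : H →L[ℂ] H :=
  CFC.sqrt (ContinuousLinearMap.adjoint S * S)

open ContinuousLinearMap
open scoped NNReal
set_option linter.unusedSectionVars false
set_option maxHeartbeats 1000000

namespace DWAux

lemma quad_nonneg {T : H →L[ℂ] H} (hT : 0 ≤ T) (x : H) : 0 ≤ RCLike.re ⟪T x, x⟫_ℂ := by
  rw [ContinuousLinearMap.nonneg_iff_isPositive] at hT
  exact hT.re_inner_nonneg_left x

lemma quad_mono {T U : H →L[ℂ] H} (h : T ≤ U) (x : H) :
    RCLike.re ⟪T x, x⟫_ℂ ≤ RCLike.re ⟪U x, x⟫_ℂ := by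
  have h0 := quad_nonneg (sub_nonneg.2 h) x
  rw [ContinuousLinearMap.sub_apply, inner_sub_left, map_sub] at h0
  linarith

lemma quad_le_norm {T : H →L[ℂ] H} {x : H} (hx : ‖x‖ = 1) : RCLike.re ⟪T x, x⟫_ℂ ≤ ‖T‖ := by
  calc RCLike.re ⟪T x, x⟫_ℂ ≤ ‖⟪T x, x⟫_ℂ‖ := RCLike.re_le_norm _
    _ ≤ ‖T x‖ * ‖x‖ := norm_inner_le_norm _ _
    _ ≤ (‖T‖ * ‖x‖) * ‖x‖ := by gcongr; exact T.le_opNorm x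
    _ = ‖T‖ := by rw [hx]; ring

lemma quad_star_mul_self (u : H →L[ℂ] H) (x : H) :
    RCLike.re ⟪(star u * u) x, x⟫_ℂ = ‖u x‖ ^ 2 := by
  rw [ContinuousLinearMap.mul_apply, ContinuousLinearMap.star_eq_adjoint, adjoint_inner_left,
    inner_self_eq_norm_sq]

lemma quad_mul_star_self (u : H →L[ℂ] H) (x : H) :
    RCLike.re ⟪(u * star u) x, x⟫_ℂ = ‖star u x‖ ^ 2 := by
  have : (u * star u) x = u (star u x) := rfl
  rw [this]
  nth_rewrite 1 [show u = adjoint (star u) by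
    rw [ContinuousLinearMap.star_eq_adjoint, adjoint_adjoint]]
  rw [adjoint_inner_left, inner_self_eq_norm_sq]


lemma tangent_le_rpow {t c p : ℝ} (ht : 0 ≤ t) (hc : 0 < c) (hp : 1 ≤ p) :
    c ^ p + p * c ^ (p - 1) * (t - c) ≤ t ^ p := by
  have hs : -1 ≤ t / c - 1 := by
    have : 0 ≤ t / c := div_nonneg ht hc.le
    linarith
  have hb := one_add_mul_self_le_rpow_one_add hs hp
  have h1 : (1 : ℝ) + (t / c - 1) = t / c := by ring
  rw [h1, Real.div_rpow ht hc.le] at hb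
  have hcp : 0 < c ^ p := Real.rpow_pos_of_pos hc p
  have hb2 : (1 + p * (t / c - 1)) * c ^ p ≤ t ^ p := by
    calc (1 + p * (t / c - 1)) * c ^ p ≤ (t ^ p / c ^ p) * c ^ p :=
          mul_le_mul_of_nonneg_right hb hcp.le
      _ = t ^ p := by field_simp
  refine le_trans (le_of_eq ?_) hb2
  rw [Real.rpow_sub hc]
  field_simp
  simp only [Real.rpow_one]

/-- Real version of subadditivity of rpow for exponents in [0,1]. -/
lemma rpow_add_le_add_rpow' {t e p : ℝ} (ht : 0 ≤ t) (he : 0 ≤ e) (hp0 : 0 ≤ p) (hp1 : p ≤ 1) :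
    (t + e) ^ p ≤ t ^ p + e ^ p := by
  have := NNReal.rpow_add_le_add_rpow t.toNNReal e.toNNReal hp0 hp1
  have hcoe : ((t.toNNReal + e.toNNReal : ℝ≥0) : ℝ) = t + e := by
    simp [Real.coe_toNNReal _ ht, Real.coe_toNNReal _ he]
  calc (t + e) ^ p = (((t.toNNReal + e.toNNReal : ℝ≥0) : ℝ)) ^ p := by rw [hcoe]
    _ = (((t.toNNReal + e.toNNReal : ℝ≥0) ^ p : ℝ≥0) : ℝ) := by
        rw [NNReal.coe_rpow]
    _ ≤ ((t.toNNReal ^ p + e.toNNReal ^ p : ℝ≥0) : ℝ) := by exact_mod_cast this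
    _ = t ^ p + e ^ p := by
        push_cast [NNReal.coe_rpow]
        rw [Real.coe_toNNReal _ ht, Real.coe_toNNReal _ he]

/-- Real two-element mean inequality for rpow, `p ≥ 1`. -/
lemma add_rpow_le_two_rpow {u v p : ℝ} (hu : 0 ≤ u) (hv : 0 ≤ v) (hp : 1 ≤ p) :
    (u + v) ^ p ≤ 2 ^ (p - 1) * (u ^ p + v ^ p) := by
  have := NNReal.rpow_add_le_mul_rpow_add_rpow u.toNNReal v.toNNReal hp
  have hcoe : ((u.toNNReal + v.toNNReal : ℝ≥0) : ℝ) = u + v := by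
    simp [Real.coe_toNNReal _ hu, Real.coe_toNNReal _ hv]
  calc (u + v) ^ p = (((u.toNNReal + v.toNNReal : ℝ≥0) : ℝ)) ^ p := by rw [hcoe]
    _ = (((u.toNNReal + v.toNNReal : ℝ≥0) ^ p : ℝ≥0) : ℝ) := by rw [NNReal.coe_rpow]
    _ ≤ (((2:ℝ≥0) ^ (p-1) * (u.toNNReal ^ p + v.toNNReal ^ p) : ℝ≥0) : ℝ) := by exact_mod_cast this
    _ = 2 ^ (p - 1) * (u ^ p + v ^ p) := by
        push_cast [NNReal.coe_rpow]
        rw [Real.coe_toNNReal _ hu, Real.coe_toNNReal _ hv]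


/-- affine cfc computation -/
lemma cfc_affine (T : H →L[ℂ] H) (hT : IsSelfAdjoint T) (β γ : ℝ) :
    cfc (fun t : ℝ => β * t + γ) T = β • T + γ • (1 : H →L[ℂ] H) := by
  rw [cfc_add (a := T) (f := fun t : ℝ => β * t) (g := fun _ : ℝ => γ) (by fun_prop) (by fun_prop),
    cfc_const_mul_id β T, cfc_const γ T, Algebra.algebraMap_eq_smul_one]

lemma quad_affine (T : H →L[ℂ] H) (β γ : ℝ) {x : H} (hx : ‖x‖ = 1) :
    RCLike.re ⟪(β • T + γ • (1 : H →L[ℂ] H)) x, x⟫_ℂ = β * RCLike.re ⟪T x, x⟫_ℂ + γ := by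
  have hxx : ⟪x, x⟫_ℂ = (1 : ℂ) := by
    rw [inner_self_eq_norm_sq_to_K, hx]; norm_num
  simp only [ContinuousLinearMap.add_apply, ContinuousLinearMap.smul_apply,
    ContinuousLinearMap.one_apply, inner_add_left, map_add]
  rw [RCLike.real_smul_eq_coe_smul (K := ℂ) β (T x), RCLike.real_smul_eq_coe_smul (K := ℂ) γ x,
    inner_smul_real_left, inner_smul_real_left, hxx]
  simp [RCLike.smul_re]

/-- McCarthy's inequality. -/
lemma mccarthy (T : H →L[ℂ] H) (hT : 0 ≤ T) {x : H} (hx : ‖x‖ = 1) {p : ℝ} (hp : 1 ≤ p) :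
    (RCLike.re ⟪T x, x⟫_ℂ) ^ p ≤ RCLike.re ⟪cfc (fun t : ℝ => t ^ p) T x, x⟫_ℂ := by
  have hTsa : IsSelfAdjoint T := IsSelfAdjoint.of_nonneg hT
  have hspec : ∀ t ∈ spectrum ℝ T, 0 ≤ t := fun t ht => spectrum_nonneg_of_nonneg hT ht
  set c := RCLike.re ⟪T x, x⟫_ℂ with hc
  have hc0 : 0 ≤ c := quad_nonneg hT x
  have hcontp : ContinuousOn (fun t : ℝ => t ^ p) (spectrum ℝ T) :=
    (Real.continuous_rpow_const (by linarith)).continuousOn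
  rcases eq_or_lt_of_le hc0 with hczero | hcpos
  · rw [← hczero, Real.zero_rpow (by linarith)]
    exact quad_nonneg (cfc_nonneg (fun t ht => Real.rpow_nonneg (hspec t ht) p)) x
  · set β := p * c ^ (p - 1) with hβ
    set γ := c ^ p - β * c with hγ
    have key : cfc (fun t : ℝ => β * t + γ) T ≤ cfc (fun t : ℝ => t ^ p) T := by
      apply cfc_mono (fun t ht => by
        have := tangent_le_rpow (hspec t ht) hcpos hp
        simp only [hγ, hβ]; linarith) (by fun_prop) hcontp
    have h1 := quad_mono key x
    rw [cfc_affine T hTsa β γ, quad_affine T β γ hx] at h1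
    calc c ^ p = β * c + γ := by rw [hγ]; ring
      _ ≤ _ := h1


lemma pow_comm' (S : H →L[ℂ] H) (n : ℕ) :
    S * (adjoint S * S) ^ n = (S * adjoint S) ^ n * S := by
  induction n with
  | zero => simp
  | succ n ih =>
    calc S * (adjoint S * S) ^ (n+1) = (S * (adjoint S * S) ^ n) * (adjoint S * S) := by
          rw [pow_succ, mul_assoc]
      _ = ((S * adjoint S) ^ n * S) * (adjoint S * S) := by rw [ih]
      _ = (S * adjoint S) ^ (n+1) * S := by rw [pow_succ]; simp only [mul_assoc]

lemma aeval_comm (S : H →L[ℂ] H) (p : Polynomial ℝ) :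
    S * Polynomial.aeval (adjoint S * S) p = Polynomial.aeval (S * adjoint S) p * S := by
  induction p using Polynomial.induction_on' with
  | add p q hp hq => rw [map_add, map_add, mul_add, add_mul, hp, hq]
  | monomial n c =>
    rw [Polynomial.aeval_monomial, Polynomial.aeval_monomial, ← mul_assoc,
      ← Algebra.commutes c S, mul_assoc, mul_assoc, pow_comm']

lemma spectrum_subset' (T : H →L[ℂ] H) (hT : 0 ≤ T) {M : ℝ} (hM : ‖T‖ * ‖(1 : H →L[ℂ] H)‖ ≤ M) :
    spectrum ℝ T ⊆ Set.Icc 0 M := by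
  intro t ht
  refine ⟨spectrum_nonneg_of_nonneg hT ht, ?_⟩
  have h1 := spectrum.subset_closedBall_norm_mul (𝕜 := ℝ) T ht
  rw [Metric.mem_closedBall, Real.dist_eq, sub_zero] at h1
  exact le_trans (le_trans (le_abs_self t) h1) hM

lemma intertwine (S : H →L[ℂ] H) {f : ℝ → ℝ}
    (hf : ContinuousOn f (Set.Icc 0 (‖S‖ ^ 2 * ‖(1 : H →L[ℂ] H)‖))) :
    S * cfc f (adjoint S * S) = cfc f (S * adjoint S) * S := by
  set M : ℝ := ‖S‖ ^ 2 * ‖(1 : H →L[ℂ] H)‖ with hMdef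
  have hM : (0:ℝ) ≤ M := by positivity
  have hA : (0 : H →L[ℂ] H) ≤ adjoint S * S := by
    rw [← ContinuousLinearMap.star_eq_adjoint]; exact star_mul_self_nonneg S
  have hB : (0 : H →L[ℂ] H) ≤ S * adjoint S := by
    rw [← ContinuousLinearMap.star_eq_adjoint]; exact mul_star_self_nonneg S
  have hadj : ‖adjoint S‖ = ‖S‖ :=
    (ContinuousLinearMap.adjoint (𝕜 := ℂ) (E := H) (F := H)).norm_map S
  have hspecA : spectrum ℝ (adjoint S * S) ⊆ Set.Icc 0 M := by
    refine spectrum_subset' _ hA ?_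
    have h2 : ‖adjoint S * S‖ ≤ ‖S‖ ^ 2 := by
      calc ‖adjoint S * S‖ ≤ ‖adjoint S‖ * ‖S‖ := norm_mul_le _ _
        _ = ‖S‖ ^ 2 := by rw [hadj]; ring
    exact mul_le_mul_of_nonneg_right h2 (norm_nonneg _)
  have hspecB : spectrum ℝ (S * adjoint S) ⊆ Set.Icc 0 M := by
    refine spectrum_subset' _ hB ?_
    have h2 : ‖S * adjoint S‖ ≤ ‖S‖ ^ 2 := by
      calc ‖S * adjoint S‖ ≤ ‖S‖ * ‖adjoint S‖ := norm_mul_le _ _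
        _ = ‖S‖ ^ 2 := by rw [hadj]; ring
    exact mul_le_mul_of_nonneg_right h2 (norm_nonneg _)
  -- the continuous-map machinery
  have hproj : Continuous (Set.projIcc (0:ℝ) M hM) := continuous_projIcc
  set ext : C(Set.Icc (0:ℝ) M, ℝ) → ℝ → ℝ := fun F => ⇑F ∘ (Set.projIcc (0:ℝ) M hM) with hext
  have hextc : ∀ F : C(Set.Icc (0:ℝ) M, ℝ), Continuous (ext F) :=
    fun F => F.continuous.comp hproj
  set Φ : C(Set.Icc (0:ℝ) M, ℝ) → (H →L[ℂ] H) := fun F =>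
    S * cfc (ext F) (adjoint S * S) - cfc (ext F) (S * adjoint S) * S with hΦ
  have hlip : LipschitzWith (2 * ‖S‖₊) Φ := by
    refine LipschitzWith.of_dist_le_mul fun F G => ?_
    have hbound : ∀ (T : H →L[ℂ] H), 0 ≤ T → spectrum ℝ T ⊆ Set.Icc 0 M →
        ‖cfc (ext F) T - cfc (ext G) T‖ ≤ ‖F - G‖ := by
      intro T hT hspec
      rw [← cfc_sub (ext F) (ext G) T ((hextc F).continuousOn) ((hextc G).continuousOn)]
      refine norm_cfc_le (norm_nonneg _) fun t ht => ?_
      calc ‖ext F t - ext G t‖ = ‖(F - G) (Set.projIcc (0:ℝ) M hM t)‖ := by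
            simp [hext]
        _ ≤ ‖F - G‖ := (F - G).norm_coe_le_norm _
    have key : Φ F - Φ G = S * (cfc (ext F) (adjoint S * S) - cfc (ext G) (adjoint S * S))
        - (cfc (ext F) (S * adjoint S) - cfc (ext G) (S * adjoint S)) * S := by
      simp only [hΦ, mul_sub, sub_mul]; abel
    calc dist (Φ F) (Φ G) = ‖Φ F - Φ G‖ := dist_eq_norm _ _
      _ = ‖S * (cfc (ext F) (adjoint S * S) - cfc (ext G) (adjoint S * S))
          - (cfc (ext F) (S * adjoint S) - cfc (ext G) (S * adjoint S)) * S‖ := by rw [key]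
      _ ≤ ‖S * (cfc (ext F) (adjoint S * S) - cfc (ext G) (adjoint S * S))‖
          + ‖(cfc (ext F) (S * adjoint S) - cfc (ext G) (S * adjoint S)) * S‖ := norm_sub_le _ _
      _ ≤ ‖S‖ * ‖F - G‖ + ‖F - G‖ * ‖S‖ := by
          gcongr
          · exact le_trans (norm_mul_le _ _) (by
              have := hbound _ hA hspecA
              exact mul_le_mul_of_nonneg_left this (norm_nonneg S))
          · exact le_trans (norm_mul_le _ _) (by
              have := hbound _ hB hspecB
              exact mul_le_mul_of_nonneg_right this (norm_nonneg S))
      _ = (2 * ‖S‖₊ : ℝ≥0) * ‖F - G‖ := by push_cast; ring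
      _ = (2 * ‖S‖₊ : ℝ≥0) * dist F G := by rw [dist_eq_norm]
  have hclosed : IsClosed {F : C(Set.Icc (0:ℝ) M, ℝ) | Φ F = 0} :=
    isClosed_singleton.preimage hlip.continuous
  have hpoly : ∀ p : Polynomial ℝ, Φ (p.toContinuousMapOn (Set.Icc (0:ℝ) M)) = 0 := by
    intro p
    have hcfc : ∀ (T : H →L[ℂ] H), 0 ≤ T → spectrum ℝ T ⊆ Set.Icc 0 M →
        cfc (ext (p.toContinuousMapOn (Set.Icc (0:ℝ) M))) T = Polynomial.aeval T p := by
      intro T hT hspec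
      rw [show ext (p.toContinuousMapOn (Set.Icc (0:ℝ) M)) =
          fun t => p.eval ((Set.projIcc (0:ℝ) M hM t : ℝ)) from rfl]
      rw [← cfc_polynomial p T hT.isSelfAdjoint]
      apply cfc_congr
      intro t ht
      simp [Set.projIcc_of_mem hM (hspec ht)]
    rw [hΦ]
    simp only
    rw [hcfc _ hA hspecA, hcfc _ hB hspecB, aeval_comm, sub_self]
  have hmem : ∀ F : C(Set.Icc (0:ℝ) M, ℝ), Φ F = 0 := by
    intro F
    have htop := polynomialFunctions.topologicalClosure (Set.Icc (0:ℝ) M)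
    have hFmem : F ∈ (polynomialFunctions (Set.Icc (0:ℝ) M)).topologicalClosure := by
      rw [htop]; trivial
    have hsub : (polynomialFunctions (Set.Icc (0:ℝ) M) : Set C(Set.Icc (0:ℝ) M, ℝ)) ⊆
        {F | Φ F = 0} := by
      intro G hG
      rw [polynomialFunctions_coe] at hG
      obtain ⟨p, rfl⟩ := hG
      exact hpoly p
    have hclos : closure (polynomialFunctions (Set.Icc (0:ℝ) M) :
        Set C(Set.Icc (0:ℝ) M, ℝ)) ⊆ {F | Φ F = 0} := closure_minimal hsub hclosed
    exact hclos hFmem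
  -- apply to the restriction of f
  set F : C(Set.Icc (0:ℝ) M, ℝ) := ⟨(Set.Icc (0:ℝ) M).restrict f, hf.restrict⟩ with hF
  have hΦF := hmem F
  have hcongr : ∀ (T : H →L[ℂ] H), spectrum ℝ T ⊆ Set.Icc 0 M →
      cfc (ext F) T = cfc f T := by
    intro T hspec
    apply cfc_congr
    intro t ht
    have htm := hspec ht
    simp only [hext, Function.comp_apply, hF, ContinuousMap.coe_mk, Set.restrict_apply,
      Set.projIcc_of_mem hM htm]
    rfl
  rw [hΦ] at hΦF
  simp only at hΦF
  rw [hcongr _ hspecA, hcongr _ hspecB] at hΦF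
  rw [sub_eq_zero] at hΦF
  exact hΦF

lemma rpow_neg_mul_le {t e α : ℝ} (ht : 0 ≤ t) (he : 0 < e) (hα0 : 0 ≤ α) (hα1 : α ≤ 1) :
    (t + e) ^ (-α) * t ≤ t ^ (1 - α) := by
  rcases eq_or_lt_of_le ht with h0 | htpos
  · rw [← h0, mul_zero]
    exact Real.rpow_nonneg le_rfl _
  · have h1 : (t + e) ^ (-α) ≤ t ^ (-α) := by
      rw [Real.rpow_neg htpos.le, Real.rpow_neg (by linarith)]
      exact inv_anti₀ (Real.rpow_pos_of_pos htpos α)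
        (Real.rpow_le_rpow htpos.le (by linarith) hα0)
    calc (t + e) ^ (-α) * t ≤ t ^ (-α) * t := mul_le_mul_of_nonneg_right h1 ht
      _ = t ^ (1 - α) := by
          rw [show (1 - α) = -α + 1 by ring, Real.rpow_add htpos, Real.rpow_one]

/-- Kato's mixed Schwarz inequality (diagonal case). -/
lemma kato (S : H →L[ℂ] H) {x : H} (hx : ‖x‖ = 1) {α : ℝ} (hα0 : 0 ≤ α) (hα1 : α ≤ 1) :
    ‖⟪S x, x⟫_ℂ‖ ^ 2 ≤
      RCLike.re ⟪cfc (fun t : ℝ => t ^ α) (adjoint S * S) x, x⟫_ℂ *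
      RCLike.re ⟪cfc (fun t : ℝ => t ^ (1 - α)) (S * adjoint S) x, x⟫_ℂ := by
  have hA : (0 : H →L[ℂ] H) ≤ adjoint S * S := by
    rw [← ContinuousLinearMap.star_eq_adjoint]; exact star_mul_self_nonneg S
  have hB : (0 : H →L[ℂ] H) ≤ S * adjoint S := by
    rw [← ContinuousLinearMap.star_eq_adjoint]; exact mul_star_self_nonneg S
  have hspecA := fun t (ht : t ∈ spectrum ℝ (adjoint S * S)) => spectrum_nonneg_of_nonneg hA ht
  have hspecB := fun t (ht : t ∈ spectrum ℝ (S * adjoint S)) => spectrum_nonneg_of_nonneg hB ht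
  rcases eq_or_lt_of_le hα0 with hα00 | hαpos
  · -- α = 0
    have e1 : cfc (fun t : ℝ => t ^ α) (adjoint S * S) = 1 := by
      rw [show (fun t : ℝ => t ^ α) = fun _ : ℝ => (1:ℝ) from
        funext fun t => by rw [← hα00, Real.rpow_zero], cfc_const 1 _ hA.isSelfAdjoint, map_one]
    have e2 : cfc (fun t : ℝ => t ^ (1 - α)) (S * adjoint S) = S * adjoint S := by
      rw [show (fun t : ℝ => t ^ (1 - α)) = fun t : ℝ => t from
        funext fun t => by rw [← hα00, sub_zero, Real.rpow_one], cfc_id' ℝ _ hB.isSelfAdjoint]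
    rw [e1, e2]
    have hxx : RCLike.re ⟪(1 : H →L[ℂ] H) x, x⟫_ℂ = 1 := by
      simp only [ContinuousLinearMap.one_apply]
      rw [inner_self_eq_norm_sq, hx]; norm_num
    rw [hxx, one_mul, ← ContinuousLinearMap.star_eq_adjoint, quad_mul_star_self]
    have h3 : ‖⟪S x, x⟫_ℂ‖ ≤ ‖star S x‖ := by
      rw [show ⟪S x, x⟫_ℂ = ⟪x, adjoint S x⟫_ℂ from (adjoint_inner_right S x x).symm]
      calc ‖⟪x, adjoint S x⟫_ℂ‖ ≤ ‖x‖ * ‖adjoint S x‖ := norm_inner_le_norm _ _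
        _ = ‖star S x‖ := by rw [hx, one_mul, ContinuousLinearMap.star_eq_adjoint]
    exact pow_le_pow_left₀ (norm_nonneg _) h3 2
  · -- 0 < α
    set gA := RCLike.re ⟪cfc (fun t : ℝ => t ^ α) (adjoint S * S) x, x⟫_ℂ with hgA
    set gB := RCLike.re ⟪cfc (fun t : ℝ => t ^ (1 - α)) (S * adjoint S) x, x⟫_ℂ with hgB
    have hgA0 : 0 ≤ gA := quad_nonneg (cfc_nonneg fun t ht => Real.rpow_nonneg (hspecA t ht) _) x
    have hgB0 : 0 ≤ gB := quad_nonneg (cfc_nonneg fun t ht => Real.rpow_nonneg (hspecB t ht) _) x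
    have key : ∀ ε : ℝ, 0 < ε → ‖⟪S x, x⟫_ℂ‖ ^ 2 ≤ (gA + ε ^ α) * gB := by
      intro ε hε
      have hc1 : Continuous (fun t : ℝ => (t + ε) ^ (α / 2)) :=
        Continuous.rpow_const (by fun_prop) fun t => Or.inr (by positivity)
      have hc2 : ContinuousOn (fun t : ℝ => (t + ε) ^ (-(α / 2))) (spectrum ℝ (adjoint S * S)) :=
        ContinuousOn.rpow_const (by fun_prop) fun t ht => Or.inl (by
          have := hspecA t ht; positivity)
      have hc2' : ContinuousOn (fun t : ℝ => (t + ε) ^ (-α)) (spectrum ℝ (adjoint S * S)) :=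
        ContinuousOn.rpow_const (by fun_prop) fun t ht => Or.inl (by
          have := hspecA t ht; positivity)
      set u := cfc (fun t : ℝ => (t + ε) ^ (α / 2)) (adjoint S * S) with hu
      set w := S * cfc (fun t : ℝ => (t + ε) ^ (-(α / 2))) (adjoint S * S) with hw
      have husa : IsSelfAdjoint u := cfc_predicate _ _
      have hvsa : IsSelfAdjoint (cfc (fun t : ℝ => (t + ε) ^ (-(α / 2))) (adjoint S * S)) :=
        cfc_predicate _ _
      have hwu : w * u = S := by
        rw [hw, hu, mul_assoc, ← cfc_mul _ _ _ hc2 hc1.continuousOn]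
        have h5 : cfc (fun t : ℝ => (t + ε) ^ (-(α / 2)) * (t + ε) ^ (α / 2)) (adjoint S * S)
            = 1 := by
          have h6 : (spectrum ℝ (adjoint S * S)).EqOn
              (fun t : ℝ => (t + ε) ^ (-(α / 2)) * (t + ε) ^ (α / 2)) (fun _ : ℝ => (1:ℝ)) := by
            intro t ht
            have h7 : (0:ℝ) < t + ε := by have := hspecA t ht; linarith
            simp only
            rw [← Real.rpow_add h7, show (-(α / 2) + α / 2 : ℝ) = 0 by ring, Real.rpow_zero]
          rw [cfc_congr h6, cfc_const 1 _ hA.isSelfAdjoint, map_one]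
        rw [h5, mul_one]
      have hinner : ⟪S x, x⟫_ℂ = ⟪u x, adjoint w x⟫_ℂ := by
        conv_lhs => rw [← hwu]
        exact (adjoint_inner_right w (u x) x).symm
      have hCS : ‖⟪S x, x⟫_ℂ‖ ≤ ‖u x‖ * ‖adjoint w x‖ := by
        rw [hinner]; exact norm_inner_le_norm _ _
      have hux : ‖u x‖ ^ 2 ≤ gA + ε ^ α := by
        rw [← quad_star_mul_self u x, husa.star_eq]
        have h8 : u * u = cfc (fun t : ℝ => (t + ε) ^ α) (adjoint S * S) := by
          rw [hu, ← cfc_mul _ _ _ hc1.continuousOn hc1.continuousOn]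
          apply cfc_congr
          intro t ht
          have h7 : (0:ℝ) < t + ε := by have := hspecA t ht; linarith
          simp only
          rw [← Real.rpow_add h7, show (α / 2 + α / 2 : ℝ) = α by ring]
        have h9 : cfc (fun t : ℝ => (t + ε) ^ α) (adjoint S * S)
            ≤ cfc (fun t : ℝ => t ^ α) (adjoint S * S) + (ε ^ α) • (1 : H →L[ℂ] H) := by
          have h10 : cfc (fun t : ℝ => t ^ α + ε ^ α) (adjoint S * S)
              = cfc (fun t : ℝ => t ^ α) (adjoint S * S) + (ε ^ α) • (1 : H →L[ℂ] H) := by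
            rw [cfc_add _ _ _ ((Real.continuous_rpow_const hα0).continuousOn) (by fun_prop),
              cfc_const _ _ hA.isSelfAdjoint, Algebra.algebraMap_eq_smul_one]
          rw [← h10]
          refine cfc_mono (fun t ht => rpow_add_le_add_rpow' (hspecA t ht) hε.le hα0 hα1)
            (ContinuousOn.rpow_const (by fun_prop) fun t ht => Or.inr hα0) ?_
          exact ((Real.continuous_rpow_const hα0).add continuous_const).continuousOn
        rw [h8]
        calc RCLike.re ⟪cfc (fun t : ℝ => (t + ε) ^ α) (adjoint S * S) x, x⟫_ℂ
            ≤ RCLike.re ⟪(cfc (fun t : ℝ => t ^ α) (adjoint S * S)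
              + (ε ^ α) • (1 : H →L[ℂ] H)) x, x⟫_ℂ := quad_mono h9 x
          _ = gA + ε ^ α := by
              rw [show cfc (fun t : ℝ => t ^ α) (adjoint S * S) + (ε ^ α) • (1 : H →L[ℂ] H)
                  = (1:ℝ) • cfc (fun t : ℝ => t ^ α) (adjoint S * S)
                    + (ε ^ α) • (1 : H →L[ℂ] H) by rw [one_smul],
                quad_affine _ _ _ hx, one_mul]
      have hwx : ‖adjoint w x‖ ^ 2 ≤ gB := by
        rw [← ContinuousLinearMap.star_eq_adjoint, ← quad_mul_star_self w x]
        have hadj : ‖adjoint S‖ = ‖S‖ :=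
          (ContinuousLinearMap.adjoint (𝕜 := ℂ) (E := H) (F := H)).norm_map S
        have hspecBM : spectrum ℝ (S * adjoint S) ⊆
            Set.Icc 0 (‖S‖ ^ 2 * ‖(1 : H →L[ℂ] H)‖) := by
          refine spectrum_subset' _ hB ?_
          have h2 : ‖S * adjoint S‖ ≤ ‖S‖ ^ 2 := by
            calc ‖S * adjoint S‖ ≤ ‖S‖ * ‖adjoint S‖ := norm_mul_le _ _
              _ = ‖S‖ ^ 2 := by rw [hadj]; ring
          exact mul_le_mul_of_nonneg_right h2 (norm_nonneg _)
        have hgcont : ContinuousOn (fun t : ℝ => (t + ε) ^ (-α))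
            (Set.Icc (0:ℝ) (‖S‖ ^ 2 * ‖(1 : H →L[ℂ] H)‖)) :=
          ContinuousOn.rpow_const (by fun_prop) fun t ht => Or.inl (by
            have := ht.1; positivity)
        have hgcontB : ContinuousOn (fun t : ℝ => (t + ε) ^ (-α))
            (spectrum ℝ (S * adjoint S)) := hgcont.mono hspecBM
        have h11 : w * star w = cfc (fun t : ℝ => (t + ε) ^ (-α) * t) (S * adjoint S) := by
          have hstarw : star w
              = cfc (fun t : ℝ => (t + ε) ^ (-(α/2))) (adjoint S * S) * star S := by
            rw [hw, star_mul, hvsa.star_eq]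
          have hvv : cfc (fun t : ℝ => (t + ε) ^ (-(α/2))) (adjoint S * S)
              * cfc (fun t : ℝ => (t + ε) ^ (-(α/2))) (adjoint S * S)
              = cfc (fun t : ℝ => (t + ε) ^ (-α)) (adjoint S * S) := by
            rw [← cfc_mul _ _ _ hc2 hc2]
            apply cfc_congr
            intro t ht
            have h7 : (0:ℝ) < t + ε := by have := hspecA t ht; linarith
            simp only
            rw [← Real.rpow_add h7, show (-(α/2) + -(α/2) : ℝ) = -α by ring]
          have hassoc : w * star w
              = S * (cfc (fun t : ℝ => (t + ε) ^ (-(α/2))) (adjoint S * S)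
                * cfc (fun t : ℝ => (t + ε) ^ (-(α/2))) (adjoint S * S)) * star S := by
            rw [hw, hstarw]; simp only [mul_assoc]
          rw [hassoc, hvv, intertwine S hgcont, mul_assoc,
            ContinuousLinearMap.star_eq_adjoint]
          have hmul : cfc (fun t : ℝ => (t + ε) ^ (-α) * t) (S * adjoint S)
              = cfc (fun t : ℝ => (t + ε) ^ (-α)) (S * adjoint S) * (S * adjoint S) := by
            rw [cfc_mul _ _ _ hgcontB (continuousOn_id' _), cfc_id' ℝ _ hB.isSelfAdjoint]
          rw [hmul]
        rw [h11]
        refine quad_mono (cfc_mono (fun t ht => rpow_neg_mul_le (hspecB t ht) hε hα0 hα1)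
          (hgcontB.mul (continuousOn_id' _))
          ((Real.continuous_rpow_const (by linarith)).continuousOn)) x
      calc ‖⟪S x, x⟫_ℂ‖ ^ 2 ≤ (‖u x‖ * ‖adjoint w x‖) ^ 2 :=
            pow_le_pow_left₀ (norm_nonneg _) hCS 2
        _ = ‖u x‖ ^ 2 * ‖adjoint w x‖ ^ 2 := by ring
        _ ≤ (gA + ε ^ α) * gB := by
            apply mul_le_mul hux hwx (sq_nonneg _) (by positivity)
    refine le_of_forall_pos_le_add fun δ hδ => ?_
    rcases eq_or_lt_of_le hgB0 with hgB00 | hgBpos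
    · have h12 := key 1 one_pos
      rw [← hgB00, mul_zero] at h12
      calc ‖⟪S x, x⟫_ℂ‖ ^ 2 ≤ 0 := h12
        _ ≤ gA * gB + δ := by rw [← hgB00, mul_zero, zero_add]; exact hδ.le
    · set ε := (δ / gB) ^ (1 / α) with hεdef
      have hδgB : 0 < δ / gB := div_pos hδ hgBpos
      have hε : 0 < ε := Real.rpow_pos_of_pos hδgB _
      have hεα : ε ^ α = δ / gB := by
        rw [hεdef, ← Real.rpow_mul hδgB.le, one_div, inv_mul_cancel₀ hαpos.ne',
          Real.rpow_one]
      have h13 := key ε hε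
      rw [hεα] at h13
      calc ‖⟪S x, x⟫_ℂ‖ ^ 2 ≤ (gA + δ / gB) * gB := h13
        _ = gA * gB + δ := by field_simp

end DWAux


open DWAux

namespace DWAux
lemma quad_add (T U : H →L[ℂ] H) (x : H) :
    RCLike.re ⟪(T + U) x, x⟫_ℂ = RCLike.re ⟪T x, x⟫_ℂ + RCLike.re ⟪U x, x⟫_ℂ := by
  rw [ContinuousLinearMap.add_apply, inner_add_left, map_add]

lemma quad_smul (T : H →L[ℂ] H) (β : ℝ) (x : H) :
    RCLike.re ⟪(β • T) x, x⟫_ℂ = β * RCLike.re ⟪T x, x⟫_ℂ := by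
  rw [ContinuousLinearMap.smul_apply, RCLike.real_smul_eq_coe_smul (K := ℂ),
    inner_smul_real_left]
  simp [RCLike.smul_re]

lemma cfc_rpow_eq (T : H →L[ℂ] H) (hT : 0 ≤ T) (y : ℝ) :
    CFC.rpow T y = cfc (fun t : ℝ => t ^ y) T := by
  rw [show CFC.rpow T y = cfc (fun s : ℝ≥0 => s ^ y) T from rfl]
  refine (cfc_nnreal_eq_real _ T hT).trans ?_
  apply cfc_congr
  intro t ht
  have ht0 : 0 ≤ t := spectrum_nonneg_of_nonneg hT ht
  simp only
  rw [NNReal.coe_rpow, Real.coe_toNNReal t ht0]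

lemma rpow_opAbs (T : H →L[ℂ] H) (hT : 0 ≤ T) {y : ℝ} (hy : 0 ≤ y) :
    CFC.rpow (CFC.sqrt T) y = cfc (fun t : ℝ => t ^ (y / 2)) T := by
  have h1 : CFC.rpow (CFC.sqrt T) y = CFC.rpow (CFC.sqrt T) ((y.toNNReal : ℝ)) := by
    rw [Real.coe_toNNReal y hy]
  rw [h1, show CFC.rpow (CFC.sqrt T) ((y.toNNReal : ℝ))
      = CFC.sqrt T ^ ((y.toNNReal : ℝ)) from rfl,
    CFC.rpow_sqrt_nnreal (x := y.toNNReal) hT,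
    show T ^ (((y.toNNReal : ℝ)) / 2) = CFC.rpow T (((y.toNNReal:ℝ)) / 2) from rfl,
    show ((y.toNNReal : ℝ) / 2) = y / 2 by rw [Real.coe_toNNReal y hy],
    cfc_rpow_eq T hT]

/-- pointwise AM-GM for rpow exponent split -/
lemma rpow_split_le {t r α : ℝ} (ht : 0 ≤ t) (hr : 0 < r) (hα0 : 0 ≤ α) (hα1 : α ≤ 1) :
    t ^ r ≤ (t ^ (2 * r * α) + t ^ (2 * r * (1 - α))) / 2 := by
  rcases eq_or_lt_of_le ht with h0 | htpos
  · rw [← h0, Real.zero_rpow hr.ne']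
    have h2 : (0:ℝ) ≤ (0:ℝ) ^ (2 * r * α) := Real.rpow_nonneg le_rfl _
    have h3 : (0:ℝ) ≤ (0:ℝ) ^ (2 * r * (1 - α)) := Real.rpow_nonneg le_rfl _
    linarith
  · have hu : t ^ r = t ^ (r * α) * t ^ (r * (1 - α)) := by
      rw [← Real.rpow_add htpos]; ring_nf
    have h4 : (t ^ (r * α)) ^ (2:ℕ) = t ^ (2 * r * α) := by
      rw [← Real.rpow_natCast (t ^ (r * α)) 2, ← Real.rpow_mul ht,
        show (r * α) * ((2:ℕ):ℝ) = 2 * r * α by push_cast; ring]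
    have h5 : (t ^ (r * (1 - α))) ^ (2:ℕ) = t ^ (2 * r * (1 - α)) := by
      rw [← Real.rpow_natCast (t ^ (r * (1 - α))) 2, ← Real.rpow_mul ht,
        show (r * (1 - α)) * ((2:ℕ):ℝ) = 2 * r * (1 - α) by push_cast; ring]
    have h6 := two_mul_le_add_sq (t ^ (r * α)) (t ^ (r * (1 - α)))
    rw [h4, h5] at h6
    rw [hu]
    linarith

lemma gpow_le_q (T : H →L[ℂ] H) (hT : 0 ≤ T) {x : H} (hx : ‖x‖ = 1) {e r : ℝ}
    (he : 0 ≤ e) (hr : 1 ≤ r) :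
    (RCLike.re ⟪cfc (fun t : ℝ => t ^ e) T x, x⟫_ℂ) ^ r
      ≤ RCLike.re ⟪cfc (fun t : ℝ => t ^ (r * e)) T x, x⟫_ℂ := by
  have hspec := fun t (ht : t ∈ spectrum ℝ T) => spectrum_nonneg_of_nonneg hT ht
  have hTe : (0:H →L[ℂ] H) ≤ cfc (fun t : ℝ => t ^ e) T :=
    cfc_nonneg fun t ht => Real.rpow_nonneg (hspec t ht) _
  refine le_trans (mccarthy _ hTe hx hr) (le_of_eq ?_)
  rw [← cfc_comp (fun s : ℝ => s ^ r) (fun t : ℝ => t ^ e) T hT.isSelfAdjoint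
    ((Real.continuous_rpow_const (by linarith)).continuousOn)
    ((Real.continuous_rpow_const he).continuousOn)]
  have hcongr : cfc ((fun s : ℝ => s ^ r) ∘ fun t : ℝ => t ^ e) T
      = cfc (fun t : ℝ => t ^ (r * e)) T := by
    apply cfc_congr
    intro t ht
    simp only [Function.comp_apply]
    rw [← Real.rpow_mul (hspec t ht), mul_comm e r]
  rw [hcongr]

end DWAux
open DWAux in
theorem dw_rpow_bound (S : H →L[ℂ] H) (α r : ℝ) (hα : α ∈ Set.Icc (0 : ℝ) 1) (hr : 2 ≤ r) :
    dwRadius S ^ r ≤ (2 ^ (r / 2) / 4) *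
      ‖CFC.rpow (opAbs S) (2 * r * α)
        + CFC.rpow (opAbs (ContinuousLinearMap.adjoint S)) (2 * r * (1 - α))
        + CFC.rpow (ContinuousLinearMap.adjoint S * S) (2 * r * α)
        + CFC.rpow (ContinuousLinearMap.adjoint S * S) (2 * r * (1 - α))‖ := by
  obtain ⟨hα0, hα1⟩ := hα
  have hα1' : 0 ≤ 1 - α := by linarith
  have hr0 : (0:ℝ) < r := by linarith
  have hr1 : (1:ℝ) ≤ r := by linarith
  have hA : (0 : H →L[ℂ] H) ≤ adjoint S * S := by
    rw [← ContinuousLinearMap.star_eq_adjoint]; exact star_mul_self_nonneg S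
  have hB : (0 : H →L[ℂ] H) ≤ S * adjoint S := by
    rw [← ContinuousLinearMap.star_eq_adjoint]; exact mul_star_self_nonneg S
  have hspecA := fun t (ht : t ∈ spectrum ℝ (adjoint S * S)) => spectrum_nonneg_of_nonneg hA ht
  -- identify the four operators
  have hP1 : CFC.rpow (opAbs S) (2 * r * α) = cfc (fun t : ℝ => t ^ (r * α)) (adjoint S * S) := by
    unfold opAbs
    rw [rpow_opAbs _ hA (by positivity), show (2 * r * α) / 2 = r * α by ring]
  have hP2 : CFC.rpow (opAbs (adjoint S)) (2 * r * (1 - α))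
      = cfc (fun t : ℝ => t ^ (r * (1 - α))) (S * adjoint S) := by
    unfold opAbs
    rw [adjoint_adjoint, rpow_opAbs _ hB (by positivity),
      show (2 * r * (1 - α)) / 2 = r * (1 - α) by ring]
  have hP3 : CFC.rpow (adjoint S * S) (2 * r * α)
      = cfc (fun t : ℝ => t ^ (2 * r * α)) (adjoint S * S) := cfc_rpow_eq _ hA _
  have hP4 : CFC.rpow (adjoint S * S) (2 * r * (1 - α))
      = cfc (fun t : ℝ => t ^ (2 * r * (1 - α))) (adjoint S * S) := cfc_rpow_eq _ hA _
  rw [hP1, hP2, hP3, hP4]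
  set P : H →L[ℂ] H := cfc (fun t : ℝ => t ^ (r * α)) (adjoint S * S)
    + cfc (fun t : ℝ => t ^ (r * (1 - α))) (S * adjoint S)
    + cfc (fun t : ℝ => t ^ (2 * r * α)) (adjoint S * S)
    + cfc (fun t : ℝ => t ^ (2 * r * (1 - α))) (adjoint S * S) with hPdef
  set c : ℝ := 2 ^ (r / 2) / 4 * ‖P‖ with hcdef
  have hc0 : 0 ≤ c := by positivity
  have key : ∀ x : H, ‖x‖ = 1 →
      Real.sqrt (‖⟪S x, x⟫_ℂ‖ ^ 2 + ‖S x‖ ^ 4) ^ r ≤ c := by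
    intro x hx
    set a : ℝ := ‖⟪S x, x⟫_ℂ‖ with hadef
    have ha0 : 0 ≤ a := norm_nonneg _
    set m : ℝ := ‖S x‖ ^ 2 with hmdef
    have hm0 : 0 ≤ m := sq_nonneg _
    set q1 := RCLike.re ⟪cfc (fun t : ℝ => t ^ (r * α)) (adjoint S * S) x, x⟫_ℂ with hq1
    set q2 := RCLike.re ⟪cfc (fun t : ℝ => t ^ (r * (1 - α))) (S * adjoint S) x, x⟫_ℂ with hq2
    set q3 := RCLike.re ⟪cfc (fun t : ℝ => t ^ (2 * r * α)) (adjoint S * S) x, x⟫_ℂ with hq3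
    set q4 := RCLike.re ⟪cfc (fun t : ℝ => t ^ (2 * r * (1 - α))) (adjoint S * S) x, x⟫_ℂ
      with hq4
    -- step A
    have stepA : a ^ r ≤ (q1 + q2) / 2 := by
      set gA := RCLike.re ⟪cfc (fun t : ℝ => t ^ α) (adjoint S * S) x, x⟫_ℂ with hgA
      set gB := RCLike.re ⟪cfc (fun t : ℝ => t ^ (1 - α)) (S * adjoint S) x, x⟫_ℂ with hgB
      have hgA0 : 0 ≤ gA := quad_nonneg (cfc_nonneg fun t ht =>
        Real.rpow_nonneg (spectrum_nonneg_of_nonneg hA ht) _) x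
      have hgB0 : 0 ≤ gB := quad_nonneg (cfc_nonneg fun t ht =>
        Real.rpow_nonneg (spectrum_nonneg_of_nonneg hB ht) _) x
      have hk := kato S hx hα0 hα1
      have h1 : a ^ r = (a ^ (2:ℕ)) ^ (r / 2) := by
        rw [← Real.rpow_natCast a 2, ← Real.rpow_mul ha0,
          show ((2:ℕ):ℝ) * (r/2) = r by push_cast; ring]
      have h2 : (a ^ (2:ℕ)) ^ (r/2) ≤ (gA * gB) ^ (r/2) :=
        Real.rpow_le_rpow (by positivity) hk (by positivity)
      have h3 : (gA * gB) ^ (r/2) = gA ^ (r/2) * gB ^ (r/2) := Real.mul_rpow hgA0 hgB0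
      have h4 : gA ^ (r/2) * gB ^ (r/2) ≤ (gA ^ r + gB ^ r) / 2 := by
        have h5 : (gA ^ (r/2)) ^ (2:ℕ) = gA ^ r := by
          rw [← Real.rpow_natCast (gA ^ (r/2)) 2, ← Real.rpow_mul hgA0,
            show (r/2) * ((2:ℕ):ℝ) = r by push_cast; ring]
        have h6 : (gB ^ (r/2)) ^ (2:ℕ) = gB ^ r := by
          rw [← Real.rpow_natCast (gB ^ (r/2)) 2, ← Real.rpow_mul hgB0,
            show (r/2) * ((2:ℕ):ℝ) = r by push_cast; ring]
        have h7 := two_mul_le_add_sq (gA ^ (r/2)) (gB ^ (r/2))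
        rw [h5, h6] at h7
        linarith
      have h8 : gA ^ r ≤ q1 := gpow_le_q _ hA hx hα0 hr1
      have h9 : gB ^ r ≤ q2 := gpow_le_q _ hB hx hα1' hr1
      calc a ^ r = (a ^ (2:ℕ)) ^ (r/2) := h1
        _ ≤ (gA * gB) ^ (r/2) := h2
        _ = gA ^ (r/2) * gB ^ (r/2) := h3
        _ ≤ (gA ^ r + gB ^ r) / 2 := h4
        _ ≤ (q1 + q2) / 2 := by linarith
    -- step B
    have stepB : m ^ r ≤ (q3 + q4) / 2 := by
      have hmq : m = RCLike.re ⟪(adjoint S * S) x, x⟫_ℂ := by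
        rw [hmdef, ← ContinuousLinearMap.star_eq_adjoint, quad_star_mul_self]
      have h10 : m ^ r ≤ RCLike.re ⟪cfc (fun t : ℝ => t ^ r) (adjoint S * S) x, x⟫_ℂ := by
        rw [hmq]; exact mccarthy _ hA hx hr1
      have h11 : cfc (fun t : ℝ => t ^ r) (adjoint S * S)
          ≤ cfc (fun t : ℝ => (1/2 : ℝ) * (t ^ (2 * r * α) + t ^ (2 * r * (1 - α))))
            (adjoint S * S) := by
        refine cfc_mono (fun t ht => ?_)
          ((Real.continuous_rpow_const hr0.le).continuousOn)
          ((((Real.continuous_rpow_const (by positivity)).add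
            (Real.continuous_rpow_const (by positivity))).const_smul (1/2:ℝ)).continuousOn)
        have := rpow_split_le (hspecA t ht) hr0 hα0 hα1
        linarith
      have h12b : cfc (fun t : ℝ => t ^ (2 * r * α) + t ^ (2 * r * (1 - α))) (adjoint S * S)
          = cfc (fun t : ℝ => t ^ (2 * r * α)) (adjoint S * S)
            + cfc (fun t : ℝ => t ^ (2 * r * (1 - α))) (adjoint S * S) :=
        cfc_add (a := adjoint S * S) (f := fun t : ℝ => t ^ (2 * r * α))
          (g := fun t : ℝ => t ^ (2 * r * (1 - α)))
          ((Real.continuous_rpow_const (by positivity)).continuousOn)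
          ((Real.continuous_rpow_const (by positivity)).continuousOn)
      have h12 : cfc (fun t : ℝ => (1/2 : ℝ) * (t ^ (2 * r * α) + t ^ (2 * r * (1 - α))))
          (adjoint S * S) = (1/2 : ℝ) • (cfc (fun t : ℝ => t ^ (2 * r * α)) (adjoint S * S)
            + cfc (fun t : ℝ => t ^ (2 * r * (1 - α))) (adjoint S * S)) := by
        rw [cfc_const_mul ((1:ℝ)/2) (fun t : ℝ => t ^ (2 * r * α) + t ^ (2 * r * (1 - α)))
            (adjoint S * S) (((Real.continuous_rpow_const (by positivity)).add
            (Real.continuous_rpow_const (by positivity))).continuousOn), h12b]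
      have h13 := quad_mono h11 x
      rw [h12] at h13
      rw [quad_smul, quad_add] at h13
      calc m ^ r ≤ _ := h10
        _ ≤ (1/2) * (q3 + q4) := h13
        _ = (q3 + q4) / 2 := by ring
    -- assemble
    have hym : a ^ 2 + ‖S x‖ ^ 4 = a ^ 2 + m ^ 2 := by rw [hmdef]; ring
    have hy0 : (0:ℝ) ≤ a ^ 2 + m ^ 2 := by positivity
    have hs1 : Real.sqrt (a ^ 2 + ‖S x‖ ^ 4) ^ r = (a ^ 2 + m ^ 2) ^ (r / 2) := by
      rw [hym, Real.sqrt_eq_rpow, ← Real.rpow_mul hy0, show (1/(2:ℝ)) * r = r / 2 by ring]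
    have hs2 : (a ^ 2 + m ^ 2) ^ (r / 2)
        ≤ 2 ^ (r / 2 - 1) * ((a ^ 2) ^ (r / 2) + (m ^ 2) ^ (r / 2)) :=
      add_rpow_le_two_rpow (by positivity) (by positivity) (by linarith)
    have hs3 : (a ^ 2) ^ (r / 2 : ℝ) = a ^ r := by
      rw [← Real.rpow_natCast a 2, ← Real.rpow_mul ha0,
        show ((2:ℕ):ℝ) * (r/2) = r by push_cast; ring]
    have hs4 : (m ^ 2) ^ (r / 2 : ℝ) = m ^ r := by
      rw [← Real.rpow_natCast m 2, ← Real.rpow_mul hm0,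
        show ((2:ℕ):ℝ) * (r/2) = r by push_cast; ring]
    have h2pos : (0:ℝ) < (2:ℝ) ^ (r / 2 - 1) := Real.rpow_pos_of_pos two_pos _
    have hs5 : (2:ℝ) ^ (r / 2 - 1 : ℝ) = (2:ℝ) ^ (r / 2 : ℝ) / 2 := by
      rw [Real.rpow_sub two_pos, Real.rpow_one]
    have hqP : q1 + q2 + q3 + q4 = RCLike.re ⟪P x, x⟫_ℂ := by
      rw [hPdef, quad_add, quad_add, quad_add]
    have hqnorm : q1 + q2 + q3 + q4 ≤ ‖P‖ := by
      rw [hqP]; exact quad_le_norm hx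
    calc Real.sqrt (a ^ 2 + ‖S x‖ ^ 4) ^ r = (a ^ 2 + m ^ 2) ^ (r / 2) := hs1
      _ ≤ 2 ^ (r / 2 - 1) * ((a ^ 2) ^ (r / 2) + (m ^ 2) ^ (r / 2)) := hs2
      _ = 2 ^ (r / 2 - 1) * (a ^ r + m ^ r) := by rw [hs3, hs4]
      _ ≤ 2 ^ (r / 2 - 1) * ((q1 + q2) / 2 + (q3 + q4) / 2) := by
          apply mul_le_mul_of_nonneg_left (by linarith) h2pos.le
      _ = 2 ^ (r / 2) / 4 * (q1 + q2 + q3 + q4) := by rw [hs5]; ring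
      _ ≤ 2 ^ (r / 2) / 4 * ‖P‖ := by
          apply mul_le_mul_of_nonneg_left hqnorm (by positivity)
      _ = c := hcdef.symm
  -- conclude via the supremum
  have hdw0 : 0 ≤ dwRadius S := Real.iSup_nonneg fun x => Real.sqrt_nonneg _
  have h1 : dwRadius S ≤ c ^ (1/r) := by
    refine Real.iSup_le (fun x => ?_) (by positivity)
    have hk := key x.1 x.2
    have hf0 : 0 ≤ Real.sqrt (‖⟪S x.1, x.1⟫_ℂ‖ ^ 2 + ‖S x.1‖ ^ 4) := Real.sqrt_nonneg _
    calc Real.sqrt (‖⟪S x.1, x.1⟫_ℂ‖ ^ 2 + ‖S x.1‖ ^ 4)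
        = (Real.sqrt (‖⟪S x.1, x.1⟫_ℂ‖ ^ 2 + ‖S x.1‖ ^ 4) ^ r) ^ (1/r) := by
          rw [← Real.rpow_mul hf0, mul_one_div, div_self hr0.ne', Real.rpow_one]
      _ ≤ c ^ (1/r) := Real.rpow_le_rpow (Real.rpow_nonneg hf0 r) hk (by positivity)
  calc dwRadius S ^ r ≤ (c ^ (1/r)) ^ r := Real.rpow_le_rpow hdw0 h1 hr0.le
    _ = c := by rw [← Real.rpow_mul hc0, one_div, inv_mul_cancel₀ hr0.ne', Real.rpow_one]
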